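/- arXiv:math/0606454 — 6 statements merged into one kernel-verified Lean document; each statement's English description precedes it below -/
import Mathlib

section
/- Let β > 0 and λ > 0. The linear operator T̂ on the Hilbert space L²(μ̂) defined by (T̂g)(x) = (x/β)·∫ y·g(y) dμ̂(y) is a bounded linear operator whose operator norm equals F(β,λ) = (2/λ)(1−e^{−λβ}) − β e^{−λβ}. -/
open Real MeasureTheory
open scoped ENNReal NNReal

/-- The measure `μ̂` on `ℝ`: the point mass `(λβ+1)e^{−λβ}` at `β` plus the measure with
density `x ↦ βλ²e^{−λx}` on `(0,β)` with respect to Lebesgue measure. -/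
noncomputable def muhat (β lam : ℝ) : Measure ℝ :=
  (ENNReal.ofReal ((lam * β + 1) * exp (-(lam * β)))) • Measure.dirac β
    + (volume.restrict (Set.Ioo 0 β)).withDensity
        (fun x => ENNReal.ofReal (β * lam ^ 2 * exp (-(lam * x))))

lemma muhat_finite (β lam : ℝ) (hβ : 0 < β) : IsFiniteMeasure (muhat β lam) := by
  constructor
  rw [muhat]
  rw [Measure.add_apply, Measure.smul_apply, withDensity_apply _ MeasurableSet.univ,
    Measure.restrict_univ]
  have h2 : ∫⁻ x, ENNReal.ofReal (β * lam ^ 2 * exp (-(lam * x)))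
      ∂(volume.restrict (Set.Ioo 0 β))
      ≤ ENNReal.ofReal (β * lam ^ 2 * exp (|lam| * β)) * volume (Set.Ioo 0 β) := by
    calc ∫⁻ x, ENNReal.ofReal (β * lam ^ 2 * exp (-(lam * x))) ∂(volume.restrict (Set.Ioo 0 β))
        ≤ ∫⁻ _x, ENNReal.ofReal (β * lam ^ 2 * exp (|lam| * β))
            ∂(volume.restrict (Set.Ioo 0 β)) := by
          refine lintegral_mono_ae ?_
          filter_upwards [ae_restrict_mem measurableSet_Ioo] with x hx
          refine ENNReal.ofReal_le_ofReal ?_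
          have he : exp (-(lam * x)) ≤ exp (|lam| * β) := by
            apply exp_le_exp.2
            have h1 : -(lam * x) ≤ |lam| * x := by
              rw [neg_mul_eq_neg_mul]
              exact mul_le_mul_of_nonneg_right (neg_le_abs lam) hx.1.le
            have h2 : |lam| * x ≤ |lam| * β := by
              exact mul_le_mul_of_nonneg_left hx.2.le (abs_nonneg lam)
            linarith
          have hnn : 0 ≤ β * lam ^ 2 := by positivity
          nlinarith [exp_pos (-(lam * x))]
      _ = _ := by
          rw [lintegral_const, Measure.restrict_apply MeasurableSet.univ, Set.univ_inter]
  have := lt_of_le_of_lt h2 (by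
    apply ENNReal.mul_lt_top ENNReal.ofReal_lt_top
    simp [Real.volume_Ioo, ENNReal.ofReal_lt_top])
  exact ENNReal.add_lt_top.2 ⟨by simp [ENNReal.mul_lt_top, measure_lt_top], this⟩

lemma muhat_ae_bound (β lam : ℝ) (hβ : 0 < β) : ∀ᵐ x ∂(muhat β lam), ‖x‖ ≤ β := by
  rw [ae_iff]
  have hnull : muhat β lam ((Set.Icc (-β) β)ᶜ) = 0 := by
    rw [muhat, Measure.add_apply, Measure.smul_apply,
      Measure.dirac_apply' _ (measurableSet_Icc.compl),
      withDensity_apply _ (measurableSet_Icc.compl),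
      Measure.restrict_restrict (measurableSet_Icc.compl)]
    have hempty : (Set.Icc (-β) β)ᶜ ∩ Set.Ioo 0 β = ∅ := by
      apply Set.eq_empty_iff_forall_notMem.2
      rintro x ⟨hc, hx1, hx2⟩
      exact hc (Set.mem_Icc.2 ⟨by linarith, hx2.le⟩)
    have hβmem : β ∉ (Set.Icc (-β) β)ᶜ := by
      simp only [Set.mem_compl_iff, Set.mem_Icc, not_not, not_and_or, not_le, not_lt]
      push_neg
      constructor <;> linarith
    rw [hempty, Set.indicator_of_notMem hβmem]
    simp
  refine measure_mono_null (fun x hx => ?_) hnull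
  simp only [Set.mem_setOf_eq, Real.norm_eq_abs, not_le] at hx
  simp only [Set.mem_compl_iff, Set.mem_Icc, not_and_or, not_le]
  rcases lt_abs.1 hx with h | h
  · right; exact h
  · left; linarith

lemma muhat_integral_sq (β lam : ℝ) (hβ : 0 < β) (hlam : 0 < lam) :
    ∫ y, y * y ∂(muhat β lam)
      = β * (2 / lam * (1 - exp (-(lam * β))) - β * exp (-(lam * β))) := by
  haveI := muhat_finite β lam hβ
  have hint : Integrable (fun y : ℝ => y * y) (muhat β lam) := by
    have hb : ∀ᵐ y ∂(muhat β lam), ‖y * y‖ ≤ β * β := by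
      filter_upwards [muhat_ae_bound β lam hβ] with y hy
      rw [Real.norm_eq_abs, abs_mul]
      rw [Real.norm_eq_abs] at hy
      nlinarith [abs_nonneg y]
    exact ((memLp_top_of_bound (continuous_id.mul continuous_id).aestronglyMeasurable
      (β * β) hb).mono_exponent le_top).integrable le_rfl
  have hint' : Integrable (fun y : ℝ => y * y)
      ((ENNReal.ofReal ((lam * β + 1) * exp (-(lam * β)))) • Measure.dirac β
        + (volume.restrict (Set.Ioo 0 β)).withDensity
            (fun x => ENNReal.ofReal (β * lam ^ 2 * exp (-(lam * x))))) := by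
    rw [← muhat]; exact hint
  rw [muhat, integral_add_measure
    (hint'.mono_measure (Measure.le_add_right le_rfl))
    (hint'.mono_measure (Measure.le_add_left le_rfl))]
  have hdirac : ∫ y, y * y ∂((ENNReal.ofReal ((lam * β + 1) * exp (-(lam * β)))) •
      Measure.dirac β) = (lam * β + 1) * exp (-(lam * β)) * (β * β) := by
    rw [integral_smul_measure, integral_dirac, smul_eq_mul,
      ENNReal.toReal_ofReal (by positivity)]
  have hwd : ∫ y, y * y ∂((volume.restrict (Set.Ioo 0 β)).withDensity
      (fun x => ENNReal.ofReal (β * lam ^ 2 * exp (-(lam * x)))))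
      = ∫ x in Set.Ioo 0 β, β * lam ^ 2 * exp (-(lam * x)) * (x * x) := by
    have hrfl : (fun x : ℝ => ENNReal.ofReal (β * lam ^ 2 * exp (-(lam * x))))
        = fun x : ℝ => ((β * lam ^ 2 * exp (-(lam * x))).toNNReal : ℝ≥0∞) := rfl
    rw [hrfl, integral_withDensity_eq_integral_smul
      ((by fun_prop : Continuous fun x : ℝ => β * lam ^ 2 * exp (-(lam * x))).measurable.real_toNNReal)]
    refine integral_congr_ae (ae_of_all _ fun x => ?_)
    simp only [NNReal.smul_def, smul_eq_mul,
      Real.coe_toNNReal _ (show (0:ℝ) ≤ β * lam ^ 2 * exp (-(lam * x)) by positivity)]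
  rw [hdirac, hwd]
  have hIoo : ∫ x in Set.Ioo 0 β, β * lam ^ 2 * exp (-(lam * x)) * (x * x)
      = ∫ x in (0:ℝ)..β, β * lam ^ 2 * exp (-(lam * x)) * (x * x) := by
    rw [intervalIntegral.integral_of_le hβ.le, integral_Ioc_eq_integral_Ioo]
  have hderiv : ∀ x ∈ Set.uIcc (0:ℝ) β,
      HasDerivAt (fun x => β * lam ^ 2 *
          (-(exp (-(lam * x)) * (x ^ 2 / lam + 2 * x / lam ^ 2 + 2 / lam ^ 3))))
        (β * lam ^ 2 * exp (-(lam * x)) * (x * x)) x := by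
    intro x _
    have h0 : HasDerivAt (fun x : ℝ => -(lam * x)) (-lam) x := by
      have := ((hasDerivAt_id x).const_mul lam).neg
      rw [mul_one] at this
      exact this
    have hexp : HasDerivAt (fun x : ℝ => exp (-(lam * x))) (exp (-(lam * x)) * (-lam)) x :=
      h0.exp
    have hpoly : HasDerivAt (fun x : ℝ => x ^ 2 / lam + 2 * x / lam ^ 2 + 2 / lam ^ 3)
        (2 * x / lam + 2 / lam ^ 2) x := by
      have h1 := ((hasDerivAt_pow 2 x).div_const lam).add
        (((hasDerivAt_id x).const_mul 2).div_const (lam ^ 2))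
      have h2 := h1.add_const (2 / lam ^ 3)
      refine h2.congr_deriv ?_
      simp
    have := ((hexp.mul hpoly).neg).const_mul (β * lam ^ 2)
    refine this.congr_deriv ?_
    field_simp
    ring
  rw [hIoo, intervalIntegral.integral_eq_sub_of_hasDerivAt hderiv
    ((by fun_prop : Continuous fun x : ℝ => β * lam ^ 2 * exp (-(lam * x)) * (x * x)).intervalIntegrable 0 β)]
  simp only [mul_zero, neg_zero, Real.exp_zero, ne_eq, zero_pow, zero_div, zero_mul]
  field_simp
  ring

/-- For `β > 0` and `λ > 0`, the linear operator `T̂` on `L²(μ̂)` defined by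
`(T̂g)(x) = (x/β)·∫ y·g(y) dμ̂(y)` is a bounded linear operator whose operator norm equals
`F(β,λ) = (2/λ)(1−e^{−λβ}) − β e^{−λβ}`. -/
theorem stmt_4 (β lam : ℝ) (hβ : 0 < β) (hlam : 0 < lam) :
    ∃ T : Lp ℝ 2 (muhat β lam) →L[ℝ] Lp ℝ 2 (muhat β lam),
      (∀ g : Lp ℝ 2 (muhat β lam),
        (T g : ℝ → ℝ) =ᵐ[muhat β lam]
          fun x => (x / β) * ∫ y, y * (g : ℝ → ℝ) y ∂(muhat β lam)) ∧
      ‖T‖ = 2 / lam * (1 - exp (-(lam * β))) - β * exp (-(lam * β)) := by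
  haveI := muhat_finite β lam hβ
  set μ := muhat β lam with hμ
  have hmem : MemLp (fun x : ℝ => x) 2 μ :=
    (memLp_top_of_bound aestronglyMeasurable_id β (muhat_ae_bound β lam hβ)).mono_exponent
      le_top
  set φ : Lp ℝ 2 μ := hmem.toLp (fun x => x) with hφdef
  have hφ : (φ : ℝ → ℝ) =ᵐ[μ] fun x => x := hmem.coeFn_toLp
  set ψ : Lp ℝ 2 μ := β⁻¹ • φ with hψdef
  refine ⟨(innerSL ℝ φ).smulRight ψ, ?_, ?_⟩
  · intro g
    have hinner : (inner ℝ φ g : ℝ) = ∫ y, y * (g : ℝ → ℝ) y ∂μ := by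
      rw [L2.inner_def]
      refine integral_congr_ae ?_
      filter_upwards [hφ] with y hy
      rw [RCLike.inner_apply, hy]
      simp [mul_comm]
    have h1 : ((innerSL ℝ φ).smulRight ψ) g = (inner ℝ φ g : ℝ) • ψ := rfl
    rw [h1]
    filter_upwards [Lp.coeFn_smul ((inner ℝ φ g : ℝ)) ψ, Lp.coeFn_smul (β⁻¹) φ, hφ]
      with x hx1 hx2 hx3
    rw [hx1]
    simp only [Pi.smul_apply, smul_eq_mul]
    rw [hx2]
    simp only [Pi.smul_apply, smul_eq_mul]
    rw [hx3, hinner]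
    ring
  · have hnsq : ‖φ‖ ^ 2 = β * (2 / lam * (1 - exp (-(lam * β))) - β * exp (-(lam * β))) := by
      rw [← real_inner_self_eq_norm_sq, L2.inner_def, ← muhat_integral_sq β lam hβ hlam]
      refine integral_congr_ae ?_
      filter_upwards [hφ] with y hy
      rw [RCLike.inner_apply, hy]
      simp
    rw [ContinuousLinearMap.norm_smulRight_apply, innerSL_apply_norm, hψdef, norm_smul,
      Real.norm_eq_abs, abs_inv, abs_of_pos hβ]
    have : ‖φ‖ * (β⁻¹ * ‖φ‖) = β⁻¹ * ‖φ‖ ^ 2 := by ring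
    rw [this, hnsq]
    field_simp
end

section
/- Let β > 0 and λ > 0. The function γ ↦ G(γ) is strictly decreasing on [0,∞), and G(γ) → 0 as γ → ∞. -/
open Real Filter

lemma key_rep (β lam t : ℝ) (ht : 0 < t) :
    (lam + t) / t ^ 2 * (1 - exp (-(t * β))) - lam * β / t * exp (-(t * β))
      = ∫ s in (0:ℝ)..β, (1 + lam * s) * exp (-(t * s)) := by
  have hF : ∀ s : ℝ, HasDerivAt (fun s => -((1 + lam * s) / t + lam / t ^ 2) * exp (-(t * s)))
      ((1 + lam * s) * exp (-(t * s))) s := by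
    intro s
    have h1 : HasDerivAt (fun s : ℝ => -((1 + lam * s) / t + lam / t ^ 2)) (-(lam / t)) s := by
      have := ((((hasDerivAt_id s).const_mul lam).const_add 1).div_const t).add_const
        (lam / t ^ 2)
      simpa [Pi.neg_def] using this.neg
    have h2 : HasDerivAt (fun s : ℝ => exp (-(t * s))) (-t * exp (-(t * s))) s := by
      have := ((hasDerivAt_id s).const_mul t).neg.exp
      simpa [mul_comm] using this
    have := h1.mul h2
    refine this.congr_deriv ?_
    have hexp : exp (-(t * s)) ≠ 0 := (exp_pos _).ne'
    have htne : t ≠ 0 := ht.ne'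
    field_simp
    ring
  rw [intervalIntegral.integral_eq_sub_of_hasDerivAt (fun s _ => hF s)]
  · field_simp
    simp only [mul_zero, neg_zero, exp_zero]
    ring
  · apply Continuous.intervalIntegrable
    continuity

/-- For `β > 0` and `λ > 0`, the function
`γ ↦ G(γ) = ((2λ+γ)/(λ+γ)²)·(1−e^{−(λ+γ)β}) − (λβ/(λ+γ))·e^{−(λ+γ)β}`
is strictly decreasing on `[0,∞)` and tends to `0` as `γ → ∞`. -/
theorem stmt_6 (β lam : ℝ) (hβ : 0 < β) (hlam : 0 < lam)
    (G : ℝ → ℝ)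
    (hG : ∀ γ : ℝ, G γ = (2 * lam + γ) / (lam + γ) ^ 2 * (1 - exp (-((lam + γ) * β)))
      - lam * β / (lam + γ) * exp (-((lam + γ) * β))) :
    StrictAntiOn G (Set.Ici 0) ∧ Tendsto G atTop (nhds 0) := by
  have hrep : ∀ γ : ℝ, 0 ≤ γ →
      G γ = ∫ s in (0:ℝ)..β, (1 + lam * s) * exp (-((lam + γ) * s)) := by
    intro γ hγ
    have ht : 0 < lam + γ := by linarith
    rw [hG γ, ← key_rep β lam (lam + γ) ht]
    ring_nf
  constructor
  · intro γ1 h1 γ2 h2 hlt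
    rw [hrep γ1 h1, hrep γ2 h2]
    have ht1 : 0 < lam + γ1 := by linarith [h1.out]
    apply intervalIntegral.integral_lt_integral_of_continuousOn_of_le_of_exists_lt hβ
    · exact (Continuous.continuousOn (by continuity))
    · exact (Continuous.continuousOn (by continuity))
    · intro s hs
      have hs0 : 0 ≤ s := hs.1.le
      have : exp (-((lam + γ2) * s)) ≤ exp (-((lam + γ1) * s)) := by
        apply exp_le_exp.mpr
        nlinarith
      have hpos : 0 ≤ 1 + lam * s := by nlinarith
      nlinarith [exp_pos (-((lam + γ2) * s)), exp_pos (-((lam + γ1) * s))]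
    · refine ⟨β, ⟨hβ.le, le_refl β⟩, ?_⟩
      have : exp (-((lam + γ2) * β)) < exp (-((lam + γ1) * β)) := by
        apply exp_lt_exp.mpr
        nlinarith
      have hpos : 0 < 1 + lam * β := by nlinarith
      nlinarith
  · -- squeeze between -(lam*β)/(lam+γ) and 2/(lam+γ)
    have hLow : Tendsto (fun γ : ℝ => -(lam * β) / (lam + γ)) atTop (nhds 0) := by
      apply Tendsto.div_atTop (tendsto_const_nhds)
      exact tendsto_atTop_add_const_left _ _ tendsto_id
    have hUp : Tendsto (fun γ : ℝ => 2 / (lam + γ)) atTop (nhds 0) := by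
      apply Tendsto.div_atTop (tendsto_const_nhds)
      exact tendsto_atTop_add_const_left _ _ tendsto_id
    apply tendsto_of_tendsto_of_tendsto_of_le_of_le' hLow hUp
    · filter_upwards [eventually_ge_atTop (0:ℝ)] with γ hγ
      rw [hG γ]
      have ht : 0 < lam + γ := by linarith
      have he : exp (-((lam + γ) * β)) ≤ 1 := by
        apply exp_le_one_iff.mpr; nlinarith
      have he0 : 0 < exp (-((lam + γ) * β)) := exp_pos _
      have hA : 0 ≤ (2 * lam + γ) / (lam + γ) ^ 2 * (1 - exp (-((lam + γ) * β))) := by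
        apply mul_nonneg
        · positivity
        · linarith
      have hB : lam * β / (lam + γ) * exp (-((lam + γ) * β)) ≤ lam * β / (lam + γ) := by
        nlinarith [div_pos (mul_pos hlam hβ) ht]
      have : -(lam * β) / (lam + γ) = -(lam * β / (lam + γ)) := by ring
      rw [this]
      linarith
    · filter_upwards [eventually_ge_atTop (0:ℝ)] with γ hγ
      rw [hG γ]
      have ht : 0 < lam + γ := by linarith
      have he : exp (-((lam + γ) * β)) ≤ 1 := by
        apply exp_le_one_iff.mpr; nlinarith
      have he0 : 0 < exp (-((lam + γ) * β)) := exp_pos _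
      have hA : (2 * lam + γ) / (lam + γ) ^ 2 * (1 - exp (-((lam + γ) * β)))
          ≤ 2 / (lam + γ) := by
        have h1 : (2 * lam + γ) / (lam + γ) ^ 2 ≤ 2 / (lam + γ) := by
          rw [div_le_div_iff₀ (by positivity) ht]
          nlinarith
        have h2 : (1 - exp (-((lam + γ) * β))) ≤ 1 := by linarith
        have h3 : 0 ≤ (2 * lam + γ) / (lam + γ) ^ 2 := by positivity
        nlinarith
      have hB : 0 ≤ lam * β / (lam + γ) * exp (-((lam + γ) * β)) := by positivity
      linarith
end

section
/- Let β > 0 and λ > 0. If F(β,λ) ≤ 1 then there is no γ > 0 with G(γ) = 1, while if F(β,λ) > 1 then there exists exactly one γ > 0 with G(γ) = 1. -/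
open Real Set

/-- For `β > 0` and `λ > 0`, with `F(β,λ) = (2/λ)(1−e^{−λβ}) − β e^{−λβ}` and
`G(γ) = ((2λ+γ)/(λ+γ)²)·(1−e^{−(λ+γ)β}) − (λβ/(λ+γ))·e^{−(λ+γ)β}`:
if `F(β,λ) ≤ 1` then there is no `γ > 0` with `G(γ) = 1`, while if `F(β,λ) > 1`
then there is exactly one `γ > 0` with `G(γ) = 1`. -/
theorem stmt_7 (β lam : ℝ) (hβ : 0 < β) (hlam : 0 < lam)
    (F : ℝ) (hF : F = 2 / lam * (1 - exp (-(lam * β))) - β * exp (-(lam * β)))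
    (G : ℝ → ℝ)
    (hG : ∀ γ : ℝ, G γ = (2 * lam + γ) / (lam + γ) ^ 2 * (1 - exp (-((lam + γ) * β)))
      - lam * β / (lam + γ) * exp (-((lam + γ) * β))) :
    (F ≤ 1 → ¬ ∃ γ : ℝ, 0 < γ ∧ G γ = 1) ∧
    (1 < F → ∃! γ : ℝ, 0 < γ ∧ G γ = 1) := by
  -- closed form equals an integral
  have hGint : ∀ μ : ℝ, 0 < μ →
      (lam + μ) / μ ^ 2 * (1 - exp (-(μ * β))) - lam * β / μ * exp (-(μ * β))
        = ∫ t in (0:ℝ)..β, (1 + lam * t) * exp (-(μ * t)) := by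
    intro μ hμ
    have hμ0 : μ ≠ 0 := ne_of_gt hμ
    have hderiv : ∀ t ∈ Set.uIcc (0:ℝ) β,
        HasDerivAt (fun t => -((1 + lam * t) / μ + lam / μ ^ 2) * exp (-(μ * t)))
          ((1 + lam * t) * exp (-(μ * t))) t := by
      intro t _
      have h1 : HasDerivAt (fun t : ℝ => -((1 + lam * t) / μ + lam / μ ^ 2))
          (-(lam / μ)) t := by
        have : HasDerivAt (fun t : ℝ => 1 + lam * t) lam t := by
          simpa using ((hasDerivAt_id t).const_mul lam).const_add 1
        exact ((this.div_const μ).add_const (lam / μ ^ 2)).neg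
      have h2 : HasDerivAt (fun t : ℝ => exp (-(μ * t))) (-μ * exp (-(μ * t))) t := by
        have : HasDerivAt (fun t : ℝ => -(μ * t)) (-μ) t := by
          have := ((hasDerivAt_id t).const_mul μ).neg
          simp only [mul_one] at this
          exact this
        simpa [mul_comm] using this.exp
      have := h1.mul h2
      refine this.congr_deriv ?_
      field_simp
      ring
    rw [intervalIntegral.integral_eq_sub_of_hasDerivAt hderiv
      ((Continuous.mul (by continuity) (by continuity)).intervalIntegrable 0 β)]
    field_simp
    simp only [mul_zero, neg_zero, exp_zero]
    ring
  -- G as integral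
  have hGI : ∀ γ : ℝ, 0 ≤ γ →
      G γ = ∫ t in (0:ℝ)..β, (1 + lam * t) * exp (-((lam + γ) * t)) := by
    intro γ hγ
    rw [hG γ, show 2 * lam + γ = lam + (lam + γ) by ring]
    exact hGint _ (by linarith)
  -- strict antitone on [0, ∞)
  have hanti : ∀ γ₁ γ₂ : ℝ, 0 ≤ γ₁ → γ₁ < γ₂ → G γ₂ < G γ₁ := by
    intro γ₁ γ₂ h1 h12
    rw [hGI γ₁ h1, hGI γ₂ (by linarith)]
    apply intervalIntegral.integral_lt_integral_of_continuousOn_of_le_of_exists_lt hβ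
      (by fun_prop) (by fun_prop)
    · intro t ht
      have h1t : (0:ℝ) < 1 + lam * t := by nlinarith [ht.1]
      have : exp (-((lam + γ₂) * t)) ≤ exp (-((lam + γ₁) * t)) := by
        apply exp_le_exp.2
        nlinarith [ht.1]
      nlinarith
    · refine ⟨β, ⟨hβ.le, le_refl β⟩, ?_⟩
      have h1t : (0:ℝ) < 1 + lam * β := by nlinarith
      have : exp (-((lam + γ₂) * β)) < exp (-((lam + γ₁) * β)) := by
        apply exp_lt_exp.2
        nlinarith
      nlinarith
  -- F = G 0
  have hF0 : F = G 0 := by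
    rw [hF, hG 0]
    have hl : lam ≠ 0 := ne_of_gt hlam
    rw [add_zero]
    field_simp
    ring
  -- G 1 < 1
  have hG1 : G 1 < 1 := by
    rw [hG 1]
    have hE0 : 0 < exp (-((lam + 1) * β)) := exp_pos _
    have hE1 : exp (-((lam + 1) * β)) < 1 := by
      rw [exp_lt_one_iff]
      nlinarith
    have hden : (0:ℝ) < (lam + 1) ^ 2 := by positivity
    have h1 : (2 * lam + 1) / (lam + 1) ^ 2 * (1 - exp (-((lam + 1) * β)))
        < (2 * lam + 1) / (lam + 1) ^ 2 := by
      have : (0:ℝ) < (2 * lam + 1) / (lam + 1) ^ 2 := by positivity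
      nlinarith
    have h2 : (2 * lam + 1) / (lam + 1) ^ 2 < 1 := by
      rw [div_lt_one hden]
      nlinarith
    have h3 : 0 < lam * β / (lam + 1) * exp (-((lam + 1) * β)) := by positivity
    linarith
  constructor
  · intro hFle ⟨γ, hγ, hGγ⟩
    have := hanti 0 γ le_rfl hγ
    rw [← hF0, hGγ] at this
    linarith
  · intro hFgt
    -- continuity of G on [0,1]
    have hcont : ContinuousOn G (Icc (0:ℝ) 1) := by
      have hGe : Set.EqOn G (fun γ => (2 * lam + γ) / (lam + γ) ^ 2 *
          (1 - exp (-((lam + γ) * β))) - lam * β / (lam + γ) * exp (-((lam + γ) * β)))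
          (Icc (0:ℝ) 1) := fun γ _ => hG γ
      refine ContinuousOn.congr ?_ hGe
      have hne : ∀ γ ∈ Icc (0:ℝ) 1, lam + γ ≠ 0 := by
        intro γ hγ; have := hγ.1; positivity
      apply ContinuousOn.sub
      · exact ContinuousOn.mul
          (ContinuousOn.div (by fun_prop) (by fun_prop)
            (fun γ hγ => pow_ne_zero 2 (hne γ hγ)))
          (by fun_prop)
      · exact ContinuousOn.mul
          (ContinuousOn.div (by fun_prop) (by fun_prop) hne)
          (by fun_prop)
    have h01 : (1:ℝ) ∈ Ioo (G 1) (G 0) := ⟨hG1, by rw [← hF0]; exact hFgt⟩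
    obtain ⟨γ, hγmem, hγ⟩ := intermediate_value_Ioo' (by norm_num : (0:ℝ) ≤ 1) hcont h01
    refine ⟨γ, ⟨hγmem.1, hγ⟩, ?_⟩
    intro γ' ⟨hγ'pos, hγ'⟩
    by_contra hne
    rcases lt_or_gt_of_ne hne with h | h
    · have := hanti γ' γ hγ'pos.le h
      rw [hγ, hγ'] at this; exact lt_irrefl 1 this
    · have := hanti γ γ' hγmem.1.le h
      rw [hγ, hγ'] at this; exact lt_irrefl 1 this
end

section
/- Let β > 0, λ > 0, and γ ≥ 0. Then (1/β)·∫ y·(1−e^{−γy}) dμ̂(y) = γ·G(γ). -/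
open Real MeasureTheory

lemma int_x_exp (a b : ℝ) (ha : 0 < a) :
    ∫ x in (0:ℝ)..b, x * exp (-(a * x))
      = (1 - exp (-(a * b)) * (1 + a * b)) / a ^ 2 := by
  have h : ∀ x : ℝ, HasDerivAt (fun t => -((t / a + 1 / a ^ 2) * exp (-(a * t))))
      (x * exp (-(a * x))) x := by
    intro x
    have h1 : HasDerivAt (fun t : ℝ => t / a + 1 / a ^ 2) (1 / a) x :=
      ((hasDerivAt_id x).div_const a).add_const (1 / a ^ 2)
    have h2 : HasDerivAt (fun t : ℝ => exp (-(a * t))) (-a * exp (-(a * x))) x := by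
      have : HasDerivAt (fun t : ℝ => -(a * t)) (-a) x := by
        simpa [Pi.neg_def] using ((hasDerivAt_id x).const_mul a).neg
      simpa [mul_comm] using this.exp
    have := (h1.mul h2).neg
    convert this using 1
    · rfl
    · rfl
    · rfl
    field_simp
    ring
  rw [intervalIntegral.integral_eq_sub_of_hasDerivAt (fun x _ => h x)]
  · field_simp
    simp only [mul_zero, neg_zero, Real.exp_zero]
    ring
  · apply Continuous.intervalIntegrable
    continuity

/-- For `β > 0`, `λ > 0` and `γ ≥ 0`, `(1/β)·∫ y·(1−e^{−γy}) dμ̂(y) = γ·G(γ)`. -/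
theorem stmt_8 (β lam γ : ℝ) (hβ : 0 < β) (hlam : 0 < lam) (hγ : 0 ≤ γ)
    (G : ℝ → ℝ)
    (hG : ∀ g : ℝ, G g = (2 * lam + g) / (lam + g) ^ 2 * (1 - exp (-((lam + g) * β)))
      - lam * β / (lam + g) * exp (-((lam + g) * β))) :
    (1 / β) * ∫ y, y * (1 - exp (-(γ * y))) ∂(muhat β lam) = γ * G γ := by
  set f : ℝ → ℝ := fun y => y * (1 - exp (-(γ * y))) with hf
  have hfc : Continuous f := by fun_prop
  set dens : ℝ → NNReal := fun x => (β * lam ^ 2 * exp (-(lam * x))).toNNReal with hdens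
  have hd : Measurable dens :=
    measurable_real_toNNReal.comp (by fun_prop)
  have hdens_coe : ∀ x, (dens x : ℝ) = β * lam ^ 2 * exp (-(lam * x)) := fun x =>
    Real.coe_toNNReal _ (by positivity)
  have hwd : ((volume.restrict (Set.Ioo 0 β)).withDensity
        (fun x => ENNReal.ofReal (β * lam ^ 2 * exp (-(lam * x)))))
      = (volume.restrict (Set.Ioo 0 β)).withDensity (fun x => (dens x : ENNReal)) := rfl
  -- continuity of the weighted integrand
  have hgc : Continuous (fun x => β * lam ^ 2 * exp (-(lam * x)) * f x) := by fun_prop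
  have hsmul_eq : (fun x => dens x • f x) = fun x => β * lam ^ 2 * exp (-(lam * x)) * f x := by
    funext x
    simp [NNReal.smul_def, hdens_coe x]
  -- integrability on each part
  have h1 : Integrable f ((ENNReal.ofReal ((lam * β + 1) * exp (-(lam * β)))) •
      Measure.dirac β) := by
    refine Integrable.smul_measure ?_ ENNReal.ofReal_ne_top
    exact (integrable_const (f β)).congr (ae_eq_dirac f).symm
  have h2 : Integrable f ((volume.restrict (Set.Ioo 0 β)).withDensity
      (fun x => ENNReal.ofReal (β * lam ^ 2 * exp (-(lam * x))))) := by
    rw [hwd]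
    rw [integrable_withDensity_iff_integrable_smul hd]
    rw [hsmul_eq]
    exact (hgc.continuousOn.integrableOn_Icc).mono_set Set.Ioo_subset_Icc_self
  rw [muhat, integral_add_measure h1 h2, integral_smul_measure, integral_dirac, hwd,
    integral_withDensity_eq_integral_smul hd]
  have hset : ∫ x in Set.Ioo (0:ℝ) β, dens x • f x
      = ∫ x in (0:ℝ)..β, β * lam ^ 2 * exp (-(lam * x)) * f x := by
    rw [intervalIntegral.integral_of_le hβ.le, ← integral_Ioc_eq_integral_Ioo, hsmul_eq]
  rw [hset]
  have key : ∀ x : ℝ, β * lam ^ 2 * exp (-(lam * x)) * f x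
      = β * lam ^ 2 * (x * exp (-(lam * x))) - β * lam ^ 2 * (x * exp (-((lam + γ) * x))) := by
    intro x
    have h : exp (-((lam + γ) * x)) = exp (-(lam * x)) * exp (-(γ * x)) := by
      rw [← Real.exp_add]; ring_nf
    rw [hf, h]; ring
  simp_rw [key]
  rw [intervalIntegral.integral_sub
      ((by fun_prop : Continuous fun x : ℝ => β * lam ^ 2 * (x * exp (-(lam * x)))).intervalIntegrable 0 β)
      ((by fun_prop : Continuous fun x : ℝ => β * lam ^ 2 * (x * exp (-((lam + γ) * x)))).intervalIntegrable 0 β),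
    intervalIntegral.integral_const_mul, intervalIntegral.integral_const_mul,
    int_x_exp lam β hlam, int_x_exp (lam + γ) β (by positivity)]
  rw [ENNReal.toReal_ofReal (by positivity), hG γ]
  have hE : exp (-((lam + γ) * β)) = exp (-(lam * β)) * exp (-(γ * β)) := by
    rw [← Real.exp_add]; ring_nf
  rw [hf]
  simp only []
  rw [hE]
  have hlg : lam + γ ≠ 0 := by positivity
  field_simp
  ring
end

section
/- Let β > 0, λ > 0, and c ≥ 0, and define φ_c(x) := 1 − e^{−cx}. Then φ_c satisfies the fixed-point equation φ_c(x) = 1 − exp(−(x/β)·∫ y·φ_c(y) dμ̂(y)) for all x ∈ (0,β] if and only if c = 0 or G(c) = 1. -/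
open Real MeasureTheory
open scoped ENNReal NNReal

lemma xexp_int (s β : ℝ) (hs : 0 < s) :
    ∫ x in (0:ℝ)..β, x * exp (-(s*x)) = (1 - (1+s*β)*exp (-(s*β)))/s^2 := by
  have key : ∀ x : ℝ, HasDerivAt (fun x => (-(s*x+1)/s^2) * exp (-(s*x)))
      (x * exp (-(s*x))) x := by
    intro x
    have h0 : HasDerivAt (fun x : ℝ => -(s*x)) (-s) x := by
      simpa [Pi.neg_def] using ((hasDerivAt_id x).const_mul s).neg
    have h2 : HasDerivAt (fun x : ℝ => exp (-(s*x))) (exp (-(s*x)) * (-s)) x := h0.exp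
    have h1 : HasDerivAt (fun x : ℝ => -(s*x+1)/s^2) (-s/s^2) x := by
      simpa using (((hasDerivAt_id x).const_mul s).add_const 1).neg.div_const (s^2)
    have : HasDerivAt (fun y => (-(s*y+1)/s^2) * exp (-(s*y))) _ x := h1.mul h2
    convert this using 1
    field_simp
    ring
  rw [intervalIntegral.integral_eq_sub_of_hasDerivAt (fun x _ => key x)
    (by apply Continuous.intervalIntegrable; continuity)]
  field_simp
  simp only [mul_zero, neg_zero, Real.exp_zero]
  ring

lemma integral_muhat (β lam : ℝ) (hβ : 0 < β) (hlam : 0 < lam) (f : ℝ → ℝ)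
    (hf : Continuous f) :
    ∫ y, f y ∂(muhat β lam)
      = (lam*β+1)*exp (-(lam*β)) * f β
        + ∫ x in (0:ℝ)..β, (β*lam^2*exp (-(lam*x))) * f x := by
  set g : ℝ → ℝ := fun x => β*lam^2*exp (-(lam*x)) with hg
  have hgc : Continuous g := by continuity
  have hgnn : ∀ x, 0 ≤ g x := fun x =>
    mul_nonneg (mul_nonneg hβ.le (sq_nonneg _)) (exp_pos _).le
  have hmeas : Measurable fun x => ENNReal.ofReal (g x) :=
    ENNReal.measurable_ofReal.comp hgc.measurable
  have hint1 : Integrable f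
      ((ENNReal.ofReal ((lam * β + 1) * exp (-(lam * β)))) • Measure.dirac β) := by
    refine Integrable.smul_measure ?_ ENNReal.ofReal_ne_top
    refine ⟨hf.aestronglyMeasurable, ?_⟩
    rw [HasFiniteIntegral, lintegral_dirac]
    exact ENNReal.coe_lt_top
  have hint2 : Integrable f
      ((volume.restrict (Set.Ioo 0 β)).withDensity fun x => ENNReal.ofReal (g x)) := by
    rw [integrable_withDensity_iff hmeas (Filter.Eventually.of_forall fun x =>
      ENNReal.ofReal_lt_top)]
    have heq : (fun x => f x * (ENNReal.ofReal (g x)).toReal) = fun x => f x * g x := by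
      funext x; rw [ENNReal.toReal_ofReal (hgnn x)]
    rw [heq]
    exact ((hf.mul hgc).integrableOn_Icc).mono_set Set.Ioo_subset_Icc_self
  rw [muhat, integral_add_measure hint1 hint2, integral_smul_measure, integral_dirac]
  have hwd : ∫ y, f y ∂((volume.restrict (Set.Ioo 0 β)).withDensity
      fun x => ENNReal.ofReal (g x)) = ∫ x in Set.Ioo 0 β, (g x) * f x := by
    have h1 : (fun x => ENNReal.ofReal (g x))
        = fun x => ((g x).toNNReal : ℝ≥0∞) := rfl
    rw [h1, integral_withDensity_eq_integral_smul
      (by exact measurable_real_toNNReal.comp hgc.measurable) f]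
    congr 1 with x
    simp [NNReal.smul_def, Real.coe_toNNReal _ (hgnn x)]
  rw [hwd, ← integral_Ioc_eq_integral_Ioo, ← intervalIntegral.integral_of_le hβ.le,
    smul_eq_mul, ENNReal.toReal_ofReal (by positivity : (0:ℝ) ≤ (lam*β+1)*exp (-(lam*β)))]

lemma key_integral (β lam c : ℝ) (hβ : 0 < β) (hlam : 0 < lam) (hc : 0 ≤ c) :
    ∫ y, y * (1 - exp (-(c * y))) ∂(muhat β lam)
      = β * c * ((2 * lam + c) / (lam + c) ^ 2 * (1 - exp (-((lam + c) * β)))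
        - lam * β / (lam + c) * exp (-((lam + c) * β))) := by
  rw [integral_muhat β lam hβ hlam _ (by continuity)]
  have hs : 0 < lam + c := by linarith
  have expand : ∀ x : ℝ, (β*lam^2*exp (-(lam*x))) * (x * (1 - exp (-(c*x))))
      = β*lam^2 * (x * exp (-(lam*x))) - β*lam^2 * (x * exp (-((lam+c)*x))) := by
    intro x
    have h2 : -((lam+c)*x) = -(lam*x) + -(c*x) := by ring
    rw [h2, Real.exp_add]
    ring
  rw [intervalIntegral.integral_congr (fun x _ => expand x)]
  rw [intervalIntegral.integral_sub
      (((Continuous.intervalIntegrable (by continuity) 0 β)))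
      (((Continuous.intervalIntegrable (by continuity) 0 β))),
    intervalIntegral.integral_const_mul, intervalIntegral.integral_const_mul,
    xexp_int lam β hlam, xexp_int (lam + c) β hs]
  have hE : exp (-((lam+c)*β)) = exp (-(lam*β)) * exp (-(c*β)) := by
    rw [← Real.exp_add]; ring_nf
  rw [hE]
  field_simp
  ring

/-- For `β > 0`, `λ > 0` and `c ≥ 0`, the function `φ_c(x) = 1 − e^{−cx}` satisfies the
fixed-point equation `φ_c(x) = 1 − exp(−(x/β)·∫ y·φ_c(y) dμ̂(y))` for all `x ∈ (0,β]`
if and only if `c = 0` or `G(c) = 1`. -/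
theorem stmt_9 (β lam c : ℝ) (hβ : 0 < β) (hlam : 0 < lam) (hc : 0 ≤ c)
    (G : ℝ → ℝ)
    (hG : ∀ g : ℝ, G g = (2 * lam + g) / (lam + g) ^ 2 * (1 - exp (-((lam + g) * β)))
      - lam * β / (lam + g) * exp (-((lam + g) * β))) :
    (∀ x ∈ Set.Ioc (0:ℝ) β,
        1 - exp (-(c * x))
          = 1 - exp (-((x / β) * ∫ y, y * (1 - exp (-(c * y))) ∂(muhat β lam))))
      ↔ (c = 0 ∨ G c = 1) := by
  have hkey : ∫ y, y * (1 - exp (-(c * y))) ∂(muhat β lam) = β * c * G c := by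
    rw [hG c]; exact key_integral β lam c hβ hlam hc
  rw [hkey]
  constructor
  · intro h
    have := h β ⟨hβ, le_refl β⟩
    have h2 : exp (-(c * β)) = exp (-(β / β * (β * c * G c))) := by linarith
    have h3 : -(c * β) = -(β / β * (β * c * G c)) := Real.exp_injective h2
    rw [div_self hβ.ne', one_mul] at h3
    have h4 : c * (β * (G c - 1)) = 0 := by linarith [h3]
    rcases mul_eq_zero.1 h4 with h5 | h5
    · exact Or.inl h5
    · right
      rcases mul_eq_zero.1 h5 with h6 | h6
      · exact absurd h6 hβ.ne'
      · linarith
  · rintro (rfl | h1) x hx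
    · simp
    · rw [h1, mul_one]
      congr 2
      field_simp
end

section
/- Let β > 0, λ > 0, and γ ≥ 0. Then ∫ (1 − e^{−γx}) dμ̂(x) = (γλβ/(λ+γ))·(1 − e^{−(λ+γ)β}) + e^{−λβ}·(1 − e^{−γβ}). -/
open Real MeasureTheory

lemma int_exp_aux (c b : ℝ) (hc : c ≠ 0) :
    ∫ x in (0:ℝ)..b, exp (-(c * x)) = (1 - exp (-(c * b))) / c := by
  have h : ∀ x ∈ Set.uIcc (0:ℝ) b,
      HasDerivAt (fun y => -(exp (-(c * y)) / c)) (exp (-(c * x))) x := by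
    intro x _
    have h1 : HasDerivAt (fun y : ℝ => -(c * y)) (-c) x := by
      have h0 : HasDerivAt (fun y : ℝ => c * y) c x := by simpa using (hasDerivAt_id x).const_mul c
      exact h0.neg
    have h2 := h1.exp
    have h3 : HasDerivAt (fun y => -(exp (-(c * y)) / c)) _ x := (h2.div_const c).neg
    convert h3 using 1
    field_simp
  have := intervalIntegral.integral_eq_sub_of_hasDerivAt h
    ((by fun_prop : Continuous fun x => exp (-(c * x))).intervalIntegrable 0 b)
  rw [this]
  field_simp
  rw [mul_zero, neg_zero, Real.exp_zero]; ring

/-- For `β > 0`, `λ > 0` and `γ ≥ 0`,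
`∫ (1 − e^{−γx}) dμ̂(x) = (γλβ/(λ+γ))·(1 − e^{−(λ+γ)β}) + e^{−λβ}·(1 − e^{−γβ})`. -/
theorem stmt_11 (β lam γ : ℝ) (hβ : 0 < β) (hlam : 0 < lam) (hγ : 0 ≤ γ) :
    ∫ x, (1 - exp (-(γ * x))) ∂(muhat β lam)
      = γ * lam * β / (lam + γ) * (1 - exp (-((lam + γ) * β)))
        + exp (-(lam * β)) * (1 - exp (-(γ * β))) := by
  set g : ℝ → ℝ := fun x => 1 - exp (-(γ * x)) with hg
  have hgcont : Continuous g := by fun_prop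
  -- density as ℝ≥0 function
  set d : ℝ → ℝ := fun x => β * lam ^ 2 * exp (-(lam * x)) with hd
  have hdnn : ∀ x, 0 ≤ d x := fun x =>
    mul_nonneg (mul_nonneg hβ.le (by positivity)) (exp_nonneg _)
  have hdmeas : Measurable (fun x => (d x).toNNReal) := by
    apply Measurable.real_toNNReal; fun_prop
  -- integrability over dirac part
  have hint1 : Integrable g ((ENNReal.ofReal ((lam * β + 1) * exp (-(lam * β)))) •
      Measure.dirac β) := by
    refine Integrable.smul_measure ?_ ENNReal.ofReal_ne_top
    refine ⟨hgcont.aestronglyMeasurable, ?_⟩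
    rw [HasFiniteIntegral, lintegral_dirac]
    exact ENNReal.coe_lt_top
  -- integrability over withDensity part
  have hwd : (fun x => ENNReal.ofReal (d x)) = (fun x => ((d x).toNNReal : ENNReal)) := rfl
  have hint2 : Integrable g ((volume.restrict (Set.Ioo 0 β)).withDensity
      (fun x => ENNReal.ofReal (d x))) := by
    rw [hwd, integrable_withDensity_iff_integrable_smul hdmeas]
    have : Continuous fun x => ((d x).toNNReal : ℝ) • g x := by
      have : (fun x => ((d x).toNNReal : ℝ) • g x) = fun x => d x * g x := by
        funext x
        simp [Real.coe_toNNReal _ (hdnn x), smul_eq_mul]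
      rw [this]; fun_prop
    exact (this.integrableOn_Icc (a := 0) (b := β)).mono_set Set.Ioo_subset_Icc_self
  rw [muhat, integral_add_measure hint1 hint2]
  -- dirac part
  rw [integral_smul_measure, integral_dirac]
  -- withDensity part
  rw [hwd, integral_withDensity_eq_integral_smul hdmeas]
  have hsmul : (fun x => ((d x).toNNReal : NNReal) • g x) = fun x => d x * g x := by
    funext x
    simp [NNReal.smul_def, Real.coe_toNNReal _ (hdnn x), smul_eq_mul]
  rw [hsmul]
  rw [← integral_Ioc_eq_integral_Ioo, ← intervalIntegral.integral_of_le hβ.le]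
  have hexpand : ∀ x : ℝ, d x * g x
      = β * lam ^ 2 * exp (-(lam * x)) - β * lam ^ 2 * exp (-((lam + γ) * x)) := by
    intro x
    simp only [hd, hg]
    rw [show -((lam + γ) * x) = -(lam * x) + -(γ * x) by ring, Real.exp_add]
    ring
  simp only [hexpand]
  rw [intervalIntegral.integral_sub ((by fun_prop : Continuous fun x => β * lam ^ 2 * exp (-(lam * x))).intervalIntegrable 0 β) ((by fun_prop : Continuous fun x => β * lam ^ 2 * exp (-((lam + γ) * x))).intervalIntegrable 0 β),
    intervalIntegral.integral_const_mul, intervalIntegral.integral_const_mul,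
    int_exp_aux lam β hlam.ne', int_exp_aux (lam + γ) β (by positivity)]
  have hE : exp (-((lam + γ) * β)) = exp (-(lam * β)) * exp (-(γ * β)) := by
    rw [← Real.exp_add]; ring_nf
  rw [ENNReal.toReal_ofReal (by positivity)]
  simp only [smul_eq_mul, hg]
  rw [hE]
  have hlg : lam + γ ≠ 0 := by positivity
  field_simp
  ring
end
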